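/- The equivalence ≡_A is exactly characterized as follows: t₁ ≡_A t₂ iff there is a multiplicity-preserving bijection between occurrences of t₁ and t₂ matching equal calls, which preserves the relative order of every pair of occurrences (a, b) such that a or b is sequential, or both a and b are readonly. -/

import Mathlib

/-- Annotation classes for external calls. -/
inductive Ann where
  | sequential | readonly | unordered
deriving DecidableEq

/-- An external call: an identifier together with its annotation class. -/
structure Call where
  name : ℕ
  ann : Ann
deriving DecidableEq

/-- A swap of adjacent calls `a`, `b` is allowed iff neither is sequential
and not both are readonly. -/
def allowedSwap (a b : Call) : Prop :=
  a.ann ≠ Ann.sequential ∧ b.ann ≠ Ann.sequential ∧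
    ¬(a.ann = Ann.readonly ∧ b.ann = Ann.readonly)

/-- One allowed adjacent swap in a trace. -/
inductive SwapStep : List Call → List Call → Prop
  | swap (pre post : List Call) (a b : Call) (h : allowedSwap a b) :
      SwapStep (pre ++ a :: b :: post) (pre ++ b :: a :: post)

/-- `TraceEquiv t₁ t₂` (`t₁ ≡_A t₂`): `t₂` is obtained from `t₁` by a finite
sequence of allowed adjacent swaps. -/
def TraceEquiv : List Call → List Call → Prop :=
  Relation.ReflTransGen SwapStep

/-- A pair of calls for which adjacent swapping is disallowed:
one of them is sequential, or both are readonly. -/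
def blockedPair (a b : Call) : Prop :=
  a.ann = Ann.sequential ∨ b.ann = Ann.sequential ∨
    (a.ann = Ann.readonly ∧ b.ann = Ann.readonly)

/- ------------------ auxiliary lemmas ------------------ -/

lemma allowed_iff_not_blocked (a b : Call) : allowedSwap a b ↔ ¬ blockedPair a b := by
  unfold allowedSwap blockedPair; tauto

/-- natural-number version of an adjacent transposition -/
def ns (p k : ℕ) : ℕ := if k = p then p + 1 else if k = p + 1 then p else k

lemma ns_lt {p a b : ℕ} (hab : a < b) (hne : ¬(a = p ∧ b = p + 1)) :
    ns p a < ns p b := by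
  unfold ns; split_ifs <;> omega

lemma ns_lt_len {p k n : ℕ} (hp : p + 1 < n) (hk : k < n) : ns p k < n := by
  unfold ns; split_ifs <;> omega

lemma swap_val {n : ℕ} (p q i : Fin n) (h : (p : ℕ) + 1 = (q : ℕ)) :
    ((Equiv.swap p q i : Fin n) : ℕ) = ns (p : ℕ) (i : ℕ) := by
  unfold ns
  rcases eq_or_ne i p with hip | hip
  · subst hip; rw [Equiv.swap_apply_left, if_pos rfl]; omega
  · rcases eq_or_ne i q with hiq | hiq
    · subst hiq
      rw [Equiv.swap_apply_right, if_neg (by omega), if_pos (by omega)]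
    · rw [Equiv.swap_apply_of_ne_of_ne hip hiq,
        if_neg (fun hh => hip (Fin.ext hh)), if_neg (fun hh => hiq (Fin.ext (by omega)))]

lemma getElem_swap (pre post : List Call) (x y : Call) (k : ℕ)
    (hk' : ns pre.length k < (pre ++ x :: y :: post).length)
    (hk : k < (pre ++ y :: x :: post).length) :
    (pre ++ x :: y :: post)[ns pre.length k]'hk' = (pre ++ y :: x :: post)[k]'hk := by
  have hklt : k < pre.length + 2 + post.length := by
    simpa [Nat.add_assoc, Nat.add_comm, Nat.add_left_comm] using hk
  unfold ns
  split_ifs with h1 h2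
  · subst h1
    rw [List.getElem_append_right (by omega), List.getElem_append_right (by omega)]
    simp
  · subst h2
    rw [List.getElem_append_right (by omega), List.getElem_append_right (by omega)]
    simp
  · rcases lt_or_ge k pre.length with h | h
    · rw [List.getElem_append_left h, List.getElem_append_left h]
    · have h3 : pre.length + 1 < k := by omega
      rw [List.getElem_append_right (by omega), List.getElem_append_right (by omega)]
      obtain ⟨m, hm⟩ : ∃ m, k - pre.length = m + 2 := ⟨k - pre.length - 2, by omega⟩
      simp [hm]

lemma getElem_mid_left (pre post : List Call) (x y : Call)
    (h : pre.length < (pre ++ x :: y :: post).length) :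
    (pre ++ x :: y :: post)[pre.length]'h = x := by
  rw [List.getElem_append_right le_rfl]; simp

lemma getElem_mid_right (pre post : List Call) (x y : Call)
    (h : pre.length + 1 < (pre ++ x :: y :: post).length) :
    (pre ++ x :: y :: post)[pre.length + 1]'h = y := by
  rw [List.getElem_append_right (by omega)]
  have : pre.length + 1 - pre.length = 1 := by omega
  simp [this]

/- ------------------ forward direction ------------------ -/

lemma swapStep_bij {t t' : List Call} (h : SwapStep t t') :
    ∃ σ : Fin t.length ≃ Fin t'.length,
      (∀ i, t'.get (σ i) = t.get i) ∧
      (∀ i j, i < j → blockedPair (t.get i) (t.get j) → σ i < σ j) := by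
  rcases h with ⟨pre, post, a, b, hab⟩
  have hlen : (pre ++ a :: b :: post).length = (pre ++ b :: a :: post).length := by simp
  have hplen : pre.length + 1 < (pre ++ a :: b :: post).length := by
    simp [Nat.add_assoc]
  set n := (pre ++ a :: b :: post).length with hn
  set p : Fin n := ⟨pre.length, by omega⟩ with hp
  set q : Fin n := ⟨pre.length + 1, hplen⟩ with hq
  have hvalσ : ∀ i : Fin n,
      (((Equiv.swap p q).trans (finCongr hlen)) i : ℕ) = ns pre.length (i : ℕ) := by
    intro i
    simp only [Equiv.trans_apply, finCongr_apply, Fin.coe_cast]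
    exact swap_val p q i rfl
  refine ⟨(Equiv.swap p q).trans (finCongr hlen), ?_, ?_⟩
  · intro i
    have hlt : ns pre.length (i : ℕ) < (pre ++ b :: a :: post).length := by
      rw [← hlen]; exact ns_lt_len hplen i.isLt
    have hσ : ((Equiv.swap p q).trans (finCongr hlen)) i = ⟨ns pre.length (i : ℕ), hlt⟩ :=
      Fin.ext (hvalσ i)
    rw [hσ]
    simp only [List.get_eq_getElem]
    exact getElem_swap pre post b a (i : ℕ) hlt i.isLt
  · intro i j hij hblock
    rw [Fin.lt_def, hvalσ i, hvalσ j]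
    apply ns_lt hij
    rintro ⟨hik, hjk⟩
    have hia : (pre ++ a :: b :: post).get i = a := by
      simp only [List.get_eq_getElem]
      have hlt : pre.length < n := by omega
      have : i = (⟨pre.length, hlt⟩ : Fin n) := Fin.ext hik
      rw [this]
      exact getElem_mid_left pre post a b hlt
    have hjb : (pre ++ a :: b :: post).get j = b := by
      simp only [List.get_eq_getElem]
      have : j = (⟨pre.length + 1, hplen⟩ : Fin n) := Fin.ext hjk
      rw [this]
      exact getElem_mid_right pre post a b hplen
    rw [hia, hjb] at hblock
    exact (allowed_iff_not_blocked a b).mp hab hblock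

/- ------------------ inversion count ------------------ -/

/-- number of inversions of an equivalence between `Fin` types -/
def invCount {n m : ℕ} (σ : Fin n ≃ Fin m) : ℕ :=
  (Finset.univ.filter (fun pq : Fin n × Fin n => pq.1 < pq.2 ∧ σ pq.2 < σ pq.1)).card

lemma invCount_cast {n n' m : ℕ} (h : n = n') (e : Fin n' ≃ Fin m) :
    invCount ((finCongr h).trans e) = invCount e := by
  subst h
  rw [finCongr_refl, Equiv.refl_trans]

lemma invCount_swap_lt {n m : ℕ} (σ : Fin n ≃ Fin m) (p q : Fin n)
    (hpq : (p : ℕ) + 1 = (q : ℕ)) (hinv : σ q < σ p) :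
    invCount ((Equiv.swap p q).trans σ) < invCount σ := by
  classical
  have hpq' : p < q := by rw [Fin.lt_def]; omega
  have hT : (p, q) ∈ Finset.univ.filter
      (fun pq : Fin n × Fin n => pq.1 < pq.2 ∧ σ pq.2 < σ pq.1) := by
    simp [hpq', hinv]
  have hle : invCount ((Equiv.swap p q).trans σ) ≤
      ((Finset.univ.filter
        (fun pq : Fin n × Fin n => pq.1 < pq.2 ∧ σ pq.2 < σ pq.1)).erase (p, q)).card := by
    apply Finset.card_le_card_of_injOn
      (fun pq => (Equiv.swap p q pq.1, Equiv.swap p q pq.2))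
    · rintro ⟨A, B⟩ hab
      change (A, B) ∈ Finset.univ.filter (fun pq : Fin n × Fin n =>
        pq.1 < pq.2 ∧ σ (Equiv.swap p q pq.2) < σ (Equiv.swap p q pq.1)) at hab
      simp only [invCount, Finset.mem_filter, Finset.mem_univ, true_and,
        Equiv.trans_apply] at hab
      obtain ⟨hab1, hab2⟩ := hab
      have hvA := swap_val p q A hpq
      have hvB := swap_val p q B hpq
      have hne : ¬((A : ℕ) = (p : ℕ) ∧ (B : ℕ) = (p : ℕ) + 1) := by
        rintro ⟨ha, hb⟩
        have ha' : A = p := Fin.ext ha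
        have hb' : B = q := Fin.ext (by omega)
        subst ha'; subst hb'
        rw [Equiv.swap_apply_left, Equiv.swap_apply_right] at hab2
        exact absurd hab2 (not_lt.mpr (le_of_lt hinv))
      have hlt : Equiv.swap p q A < Equiv.swap p q B := by
        rw [Fin.lt_def, hvA, hvB]
        exact ns_lt hab1 hne
      show (Equiv.swap p q A, Equiv.swap p q B) ∈ (Finset.univ.filter
        (fun pq : Fin n × Fin n => pq.1 < pq.2 ∧ σ pq.2 < σ pq.1)).erase (p, q)
      rw [Finset.mem_erase]
      constructor
      case right =>
        simp only [Finset.mem_filter, Finset.mem_univ, true_and]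
        exact ⟨hlt, hab2⟩
      intro hpqeq
      have h1 : Equiv.swap p q A = p := congrArg Prod.fst hpqeq
      have h2 : Equiv.swap p q B = q := congrArg Prod.snd hpqeq
      have ha : A = q := by
        have := congrArg (Equiv.swap p q) h1
        rwa [Equiv.swap_apply_self, Equiv.swap_apply_left] at this
      have hb : B = p := by
        have := congrArg (Equiv.swap p q) h2
        rwa [Equiv.swap_apply_self, Equiv.swap_apply_right] at this
      subst ha; subst hb
      exact absurd hab1 (not_lt.mpr (le_of_lt hpq'))
    · intro x _ y _ hxy
      have h1 : Equiv.swap p q x.1 = Equiv.swap p q y.1 := congrArg Prod.fst hxy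
      have h2 : Equiv.swap p q x.2 = Equiv.swap p q y.2 := congrArg Prod.snd hxy
      exact Prod.ext ((Equiv.swap p q).injective h1) ((Equiv.swap p q).injective h2)
  exact lt_of_le_of_lt hle (Finset.card_erase_lt_of_mem hT)

/- ------------------ backward direction ------------------ -/

lemma eq_of_no_adjInv (t₁ t₂ : List Call) (σ : Fin t₁.length ≃ Fin t₂.length)
    (hget : ∀ i, t₂.get (σ i) = t₁.get i)
    (hex : ∀ (k : ℕ) (hk : k + 1 < t₁.length), σ ⟨k, by omega⟩ ≤ σ ⟨k + 1, hk⟩) :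
    t₁ = t₂ := by
  have step : ∀ (k : ℕ) (hk : k + 1 < t₁.length),
      σ ⟨k, by omega⟩ < σ ⟨k + 1, hk⟩ := by
    intro k hk
    rcases lt_trichotomy (σ ⟨k, by omega⟩) (σ ⟨k + 1, hk⟩) with h | h | h
    · exact h
    · exact absurd (σ.injective h) (by simp [Fin.ext_iff])
    · exact absurd h (not_lt.mpr (hex k hk))
  have mono : ∀ (d k : ℕ) (hk : k < t₁.length) (hk' : k + d + 1 < t₁.length),
      σ ⟨k, hk⟩ < σ ⟨k + d + 1, hk'⟩ := by
    intro d
    induction d with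
    | zero => intro k hk hk'; exact step k hk'
    | succ d ih =>
      intro k hk hk'
      exact lt_trans (ih k hk (by omega)) (step (k + d + 1) hk')
  have mono' : ∀ (i j : Fin t₁.length), i < j → σ i < σ j := by
    intro i j hij
    have hij' : (i : ℕ) < (j : ℕ) := hij
    have hd : (j : ℕ) = (i : ℕ) + ((j : ℕ) - (i : ℕ) - 1) + 1 := by omega
    have hlt : (i : ℕ) + ((j : ℕ) - (i : ℕ) - 1) + 1 < t₁.length := by
      rw [← hd]; exact j.isLt
    have h := mono ((j : ℕ) - (i : ℕ) - 1) (i : ℕ) i.isLt hlt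
    have e1 : (⟨(i : ℕ), i.isLt⟩ : Fin t₁.length) = i := Fin.ext rfl
    have e2 : (⟨(i : ℕ) + ((j : ℕ) - (i : ℕ) - 1) + 1, hlt⟩ : Fin t₁.length) = j :=
      Fin.ext hd.symm
    rw [e1, e2] at h
    exact h
  have le1 : ∀ (k : ℕ) (hk : k < t₁.length), k ≤ (σ ⟨k, hk⟩ : ℕ) := by
    intro k
    induction k with
    | zero => intro hk; omega
    | succ k ih =>
      intro hk
      have h1 := ih (by omega)
      have h2 := step k hk
      rw [Fin.lt_def] at h2
      omega
  have mono'' : ∀ (i j : Fin t₂.length), i < j → σ.symm i < σ.symm j := by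
    intro i j hij
    rcases lt_trichotomy (σ.symm i) (σ.symm j) with h | h | h
    · exact h
    · exact absurd (σ.symm.injective h) (by
        intro hh; subst hh; exact lt_irrefl _ hij)
    · have := mono' _ _ h
      simp only [Equiv.apply_symm_apply] at this
      exact absurd hij (not_lt.mpr (le_of_lt this))
  have le2 : ∀ (k : ℕ) (hk : k < t₂.length), k ≤ (σ.symm ⟨k, hk⟩ : ℕ) := by
    intro k
    induction k with
    | zero => intro hk; omega
    | succ k ih =>
      intro hk
      have h1 := ih (by omega)
      have h2 := mono'' ⟨k, by omega⟩ ⟨k + 1, hk⟩ (Fin.mk_lt_mk.mpr (by omega))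
      rw [Fin.lt_def] at h2
      omega
  have hval : ∀ (i : Fin t₁.length), ((σ i : Fin t₂.length) : ℕ) = (i : ℕ) := by
    intro i
    have h1 := le1 (i : ℕ) i.isLt
    have h2 := le2 ((σ i : Fin t₂.length) : ℕ) (σ i).isLt
    have h3 : σ.symm ⟨((σ i : Fin t₂.length) : ℕ), (σ i).isLt⟩ = i := by
      have he : (⟨((σ i : Fin t₂.length) : ℕ), (σ i).isLt⟩ : Fin t₂.length) = σ i :=
        Fin.ext rfl
      rw [he, Equiv.symm_apply_apply]
    rw [h3] at h2
    have h1' : (i : ℕ) ≤ (σ ⟨(i : ℕ), i.isLt⟩ : ℕ) := h1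
    have he2 : (⟨(i : ℕ), i.isLt⟩ : Fin t₁.length) = i := Fin.ext rfl
    rw [he2] at h1'
    omega
  have hlen : t₁.length = t₂.length := Fin.equiv_iff_eq.mp ⟨σ⟩
  apply List.ext_getElem hlen
  intro k hk1 hk2
  have hg := hget ⟨k, hk1⟩
  simp only [List.get_eq_getElem] at hg
  rw [← hg]
  congr 1
  exact hval ⟨k, hk1⟩

lemma back_step (pre post : List Call) (a b : Call) (t₂ : List Call)
    (σ : Fin (pre ++ a :: b :: post).length ≃ Fin t₂.length)
    (hget : ∀ i, t₂.get (σ i) = (pre ++ a :: b :: post).get i)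
    (hord : ∀ i j, i < j →
      blockedPair ((pre ++ a :: b :: post).get i) ((pre ++ a :: b :: post).get j) →
      σ i < σ j)
    (hplen : pre.length + 1 < (pre ++ a :: b :: post).length)
    (hinv : σ ⟨pre.length + 1, hplen⟩ < σ ⟨pre.length, by omega⟩) :
    ∃ σ' : Fin (pre ++ b :: a :: post).length ≃ Fin t₂.length,
      SwapStep (pre ++ a :: b :: post) (pre ++ b :: a :: post) ∧
      invCount σ' < invCount σ ∧
      (∀ i, t₂.get (σ' i) = (pre ++ b :: a :: post).get i) ∧
      (∀ i j, i < j →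
        blockedPair ((pre ++ b :: a :: post).get i) ((pre ++ b :: a :: post).get j) →
        σ' i < σ' j) := by
  have hlen' : (pre ++ b :: a :: post).length = (pre ++ a :: b :: post).length := by simp
  set p : Fin (pre ++ a :: b :: post).length := ⟨pre.length, by omega⟩ with hp
  set q : Fin (pre ++ a :: b :: post).length := ⟨pre.length + 1, hplen⟩ with hq
  refine ⟨(finCongr hlen').trans ((Equiv.swap p q).trans σ), ?_, ?_, ?_, ?_⟩
  · -- the swap step
    have hallow : allowedSwap a b := by
      rw [allowed_iff_not_blocked]
      intro hbl
      have hpq : p < q := by rw [hp, hq, Fin.mk_lt_mk]; omega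
      have hga : (pre ++ a :: b :: post).get p = a := getElem_mid_left pre post a b _
      have hgb : (pre ++ a :: b :: post).get q = b := getElem_mid_right pre post a b _
      have := hord p q hpq (by rw [hga, hgb]; exact hbl)
      exact absurd this (not_lt.mpr (le_of_lt hinv))
    exact SwapStep.swap pre post a b hallow
  · -- the inversion count decreases
    rw [invCount_cast hlen']
    exact invCount_swap_lt σ p q rfl hinv
  · -- the get property
    intro i
    have hσapp : ((finCongr hlen').trans ((Equiv.swap p q).trans σ)) i
        = σ (Equiv.swap p q (Fin.cast hlen' i)) := rfl
    have hswval : ((Equiv.swap p q (Fin.cast hlen' i)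
        : Fin (pre ++ a :: b :: post).length) : ℕ) = ns pre.length (i : ℕ) :=
      swap_val p q (Fin.cast hlen' i) rfl
    have hlt : ns pre.length (i : ℕ) < (pre ++ a :: b :: post).length :=
      ns_lt_len hplen (by omega)
    have he : Equiv.swap p q (Fin.cast hlen' i)
        = (⟨ns pre.length (i : ℕ), hlt⟩ : Fin (pre ++ a :: b :: post).length) :=
      Fin.ext hswval
    rw [hσapp, hget, he]
    simp only [List.get_eq_getElem]
    exact getElem_swap pre post a b (i : ℕ) hlt i.isLt
  · -- the order property
    intro i j hij hbl
    have hAB : ∀ ii : Fin (pre ++ b :: a :: post).length,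
        (pre ++ a :: b :: post).get (Equiv.swap p q (Fin.cast hlen' ii))
          = (pre ++ b :: a :: post).get ii := by
      intro ii
      have hswval : ((Equiv.swap p q (Fin.cast hlen' ii)
          : Fin (pre ++ a :: b :: post).length) : ℕ) = ns pre.length (ii : ℕ) :=
        swap_val p q (Fin.cast hlen' ii) rfl
      have hlt : ns pre.length (ii : ℕ) < (pre ++ a :: b :: post).length :=
        ns_lt_len hplen (by omega)
      have he : Equiv.swap p q (Fin.cast hlen' ii)
          = (⟨ns pre.length (ii : ℕ), hlt⟩ : Fin (pre ++ a :: b :: post).length) :=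
        Fin.ext hswval
      rw [he]
      simp only [List.get_eq_getElem]
      exact getElem_swap pre post a b (ii : ℕ) hlt ii.isLt
    show σ (Equiv.swap p q (Fin.cast hlen' i)) < σ (Equiv.swap p q (Fin.cast hlen' j))
    by_cases hcase : (i : ℕ) = pre.length ∧ (j : ℕ) = pre.length + 1
    · have hi : Equiv.swap p q (Fin.cast hlen' i) = q := by
        have h : Fin.cast hlen' i = p := Fin.ext hcase.1
        rw [h, Equiv.swap_apply_left]
      have hj : Equiv.swap p q (Fin.cast hlen' j) = p := by
        have h : Fin.cast hlen' j = q := Fin.ext hcase.2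
        rw [h, Equiv.swap_apply_right]
      rw [hi, hj]
      exact hinv
    · have hlt : Equiv.swap p q (Fin.cast hlen' i)
          < Equiv.swap p q (Fin.cast hlen' j) := by
        rw [Fin.lt_def, swap_val p q (Fin.cast hlen' i) rfl,
          swap_val p q (Fin.cast hlen' j) rfl]
        exact ns_lt hij hcase
      apply hord _ _ hlt
      rw [hAB i, hAB j]
      exact hbl

lemma back (N : ℕ) : ∀ (t₁ t₂ : List Call) (σ : Fin t₁.length ≃ Fin t₂.length),
    invCount σ ≤ N →
    (∀ i, t₂.get (σ i) = t₁.get i) →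
    (∀ i j, i < j → blockedPair (t₁.get i) (t₁.get j) → σ i < σ j) →
    TraceEquiv t₁ t₂ := by
  induction N with
  | zero =>
    intro t₁ t₂ σ hN hget hord
    by_cases hex : ∃ k, ∃ hk : k + 1 < t₁.length,
        σ ⟨k + 1, hk⟩ < σ ⟨k, by omega⟩
    · obtain ⟨k, hk, hinv⟩ := hex
      have := invCount_swap_lt σ ⟨k, by omega⟩ ⟨k + 1, hk⟩ rfl hinv
      omega
    · push_neg at hex
      rw [eq_of_no_adjInv t₁ t₂ σ hget hex]
      exact Relation.ReflTransGen.refl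
  | succ N ih =>
    intro t₁ t₂ σ hN hget hord
    by_cases hex : ∃ k, ∃ hk : k + 1 < t₁.length,
        σ ⟨k + 1, hk⟩ < σ ⟨k, by omega⟩
    · obtain ⟨k, hk, hinv⟩ := hex
      obtain ⟨pre, a, b, post, hT, hkpre⟩ :
          ∃ pre a b post, t₁ = pre ++ a :: b :: post ∧ pre.length = k := by
        refine ⟨t₁.take k, t₁[k]'(by omega), t₁[k+1]'hk, t₁.drop (k + 2), ?_, ?_⟩
        · conv_lhs => rw [← List.take_append_drop k t₁]
          congr 1
          rw [List.drop_eq_getElem_cons (show k < t₁.length by omega),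
            List.drop_eq_getElem_cons (show k + 1 < t₁.length from hk)]
        · simp [List.length_take]; omega
      subst hT
      subst hkpre
      obtain ⟨σ', hstep, hcnt, hget', hord'⟩ :=
        back_step pre post a b t₂ σ hget hord hk hinv
      exact Relation.ReflTransGen.head hstep
        (ih (pre ++ b :: a :: post) t₂ σ' (by omega) hget' hord')
    · push_neg at hex
      rw [eq_of_no_adjInv t₁ t₂ σ hget hex]
      exact Relation.ReflTransGen.refl

/-- `t₁ ≡_A t₂` iff there is a bijection between occurrences
matching equal calls that preserves the relative order of every pair of
occurrences `(a, b)` where `a` or `b` is sequential, or both are readonly. -/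
theorem traceEquiv_iff_order_preserving_bijection (t₁ t₂ : List Call) :
    TraceEquiv t₁ t₂ ↔
      ∃ σ : Fin t₁.length ≃ Fin t₂.length,
        (∀ i : Fin t₁.length, t₂.get (σ i) = t₁.get i) ∧
        (∀ i j : Fin t₁.length, i < j →
          blockedPair (t₁.get i) (t₁.get j) → σ i < σ j) := by
  constructor
  · intro h
    induction h with
    | refl => exact ⟨Equiv.refl _, fun i => rfl, fun i j hij _ => hij⟩
    | tail _ hstep ihh =>
      obtain ⟨σ₁, hg₁, ho₁⟩ := ihh
      obtain ⟨σ₂, hg₂, ho₂⟩ := swapStep_bij hstep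
      refine ⟨σ₁.trans σ₂, ?_, ?_⟩
      · intro i
        simp only [Equiv.trans_apply]
        rw [hg₂ (σ₁ i), hg₁ i]
      · intro i j hij hbl
        simp only [Equiv.trans_apply]
        apply ho₂ _ _ (ho₁ i j hij hbl)
        rw [hg₁ i, hg₁ j]
        exact hbl
  · rintro ⟨σ, hg, ho⟩
    exact back (invCount σ) t₁ t₂ σ le_rfl hg ho
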